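/- arXiv:1901.00799 — 2 statements merged into one kernel-verified Lean document; each statement's English description precedes it below -/
import Mathlib

section
/- Let ε > 0 and σ ≥ 1, and for s ∈ [1, σ] let E(s) = {(x,y) ∈ ℝ² : x²/s² + s²y² ≤ ε²}. Then the area of the union ⋃_{s ∈ [1,σ]} E(s) equals (π + 2·log(σ))·ε². -/
open MeasureTheory Real
set_option maxHeartbeats 2000000

noncomputable def gfun (ε σ x : ℝ) : ℝ :=
  if x ^ 2 ≤ ε ^ 2 / 2 then ε ^ 2 - x ^ 2
  else if x ^ 2 ≤ σ ^ 2 * ε ^ 2 / 2 then ε ^ 4 / (4 * x ^ 2)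
  else ε ^ 2 / σ ^ 2 - x ^ 2 / σ ^ 4

noncomputable def Hfun (r x : ℝ) : ℝ :=
  (r ^ 2 * Real.arcsin (x / r) + x * Real.sqrt (r ^ 2 - x ^ 2)) / 2

lemma integral_sqrt_sub_sq {r c d : ℝ} (hr : 0 < r) (hc : -r ≤ c) (hcd : c ≤ d) (hd : d ≤ r) :
    ∫ x in c..d, Real.sqrt (r ^ 2 - x ^ 2) = Hfun r d - Hfun r c := by
  have hcont : ContinuousOn (Hfun r) (Set.Icc c d) := by
    apply Continuous.continuousOn
    unfold Hfun
    exact ((continuous_const.mul (Real.continuous_arcsin.comp (continuous_id.div_const r))).add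
      (continuous_id.mul ((continuous_const.sub (continuous_pow 2)).sqrt))).div_const 2
  have hderiv : ∀ x ∈ Set.Ioo c d, HasDerivWithinAt (Hfun r) (Real.sqrt (r ^ 2 - x ^ 2)) (Set.Ioi x) x := by
    intro x hx
    suffices h : HasDerivAt (Hfun r) (Real.sqrt (r ^ 2 - x ^ 2)) x from h.hasDerivWithinAt
    have hx1 : -r < x := lt_of_le_of_lt hc hx.1
    have hx2 : x < r := lt_of_lt_of_le hx.2 hd
    have hpos : 0 < r ^ 2 - x ^ 2 := by nlinarith
    have hsq : 0 < Real.sqrt (r ^ 2 - x ^ 2) := Real.sqrt_pos.2 hpos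
    have h1 : HasDerivAt (fun x : ℝ => Real.arcsin (x / r))
        (1 / Real.sqrt (1 - (x / r) ^ 2) * (1 / r)) x := by
      have := (Real.hasDerivAt_arcsin (x := x / r) (by
        intro h; rw [div_eq_iff hr.ne'] at h; nlinarith) (by
        intro h; rw [div_eq_iff hr.ne'] at h; nlinarith))
      exact this.comp x ((hasDerivAt_id x).div_const r)
    have h2 : HasDerivAt (fun x : ℝ => Real.sqrt (r ^ 2 - x ^ 2))
        (1 / (2 * Real.sqrt (r ^ 2 - x ^ 2)) * (-(2 * x))) x := by
      have hs := Real.hasDerivAt_sqrt (x := r ^ 2 - x ^ 2) hpos.ne'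
      have hinner : HasDerivAt (fun x : ℝ => r ^ 2 - x ^ 2) (-(2 * x)) x := by
        simpa using ((hasDerivAt_pow 2 x).const_sub (r ^ 2))
      exact hs.comp x hinner
    have h3 : HasDerivAt (fun x : ℝ => x * Real.sqrt (r ^ 2 - x ^ 2))
        (Real.sqrt (r ^ 2 - x ^ 2) + x * (1 / (2 * Real.sqrt (r ^ 2 - x ^ 2)) * (-(2 * x)))) x := by
      simpa using (hasDerivAt_id x).fun_mul h2
    have h4 := ((h1.const_mul (r ^ 2)).add h3).div_const 2
    convert h4 using 1
    · rfl
    · rfl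
    · rfl
    have hsr : Real.sqrt (1 - (x / r) ^ 2) = Real.sqrt (r ^ 2 - x ^ 2) / r := by
      rw [show (1 : ℝ) - (x / r) ^ 2 = (r ^ 2 - x ^ 2) / r ^ 2 by field_simp,
        Real.sqrt_div hpos.le, Real.sqrt_sq hr.le]
    rw [hsr]
    set S := Real.sqrt (r ^ 2 - x ^ 2) with hS
    have hS2 : S ^ 2 = r ^ 2 - x ^ 2 := Real.sq_sqrt hpos.le
    field_simp
    linear_combination hS2
  exact intervalIntegral.integral_eq_sub_of_hasDeriv_right_of_le hcd hcont hderiv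
    ((continuous_const.sub (continuous_pow 2)).sqrt.intervalIntegrable c d)

lemma gfun_key {ε σ : ℝ} (hε : 0 < ε) (hσ : 1 ≤ σ) (x y : ℝ) :
    (∃ s ∈ Set.Icc (1 : ℝ) σ, x ^ 2 / s ^ 2 + s ^ 2 * y ^ 2 ≤ ε ^ 2) ↔ y ^ 2 ≤ gfun ε σ x := by
  have hσ0 : 0 < σ := lt_of_lt_of_le one_pos hσ
  constructor
  · rintro ⟨s, ⟨hs1, hs2⟩, h⟩
    have hs0 : 0 < s := lt_of_lt_of_le one_pos hs1
    have hy : y ^ 2 ≤ ε ^ 2 / s ^ 2 - x ^ 2 / s ^ 4 := by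
      rw [div_sub_div _ _ (by positivity : (s:ℝ) ^ 2 ≠ 0) (by positivity : (s:ℝ) ^ 4 ≠ 0),
        le_div_iff₀ (by positivity)]
      have hmul := mul_le_mul_of_nonneg_right h (sq_nonneg s)
      have hxs : (x ^ 2 / s ^ 2 + s ^ 2 * y ^ 2) * s ^ 2 = x ^ 2 + s ^ 4 * y ^ 2 := by
        field_simp
      rw [hxs] at hmul
      nlinarith [hmul, sq_nonneg s, sq_nonneg (s * y)]
    refine le_trans hy ?_
    unfold gfun
    split_ifs with h1 h2
    · rw [div_sub_div _ _ (by positivity : (s:ℝ) ^ 2 ≠ 0) (by positivity : (s:ℝ) ^ 4 ≠ 0),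
        div_le_iff₀ (by positivity)]
      have hA : (0:ℝ) ≤ s ^ 2 - 1 := by nlinarith
      have hB : (0:ℝ) ≤ ε ^ 2 * s ^ 2 - x ^ 2 * (s ^ 2 + 1) := by nlinarith
      nlinarith [mul_nonneg (mul_nonneg (sq_nonneg s) hA) hB]
    · have hx0 : 0 < x ^ 2 := by nlinarith
      rw [div_sub_div _ _ (by positivity : (s:ℝ) ^ 2 ≠ 0) (by positivity : (s:ℝ) ^ 4 ≠ 0),
        div_le_div_iff₀ (by positivity) (by positivity)]
      nlinarith [sq_nonneg (ε ^ 2 * s ^ 2 - 2 * x ^ 2)]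
    · push_neg at h1 h2
      have hA := mul_le_mul_of_nonneg_right h2.le (by positivity : (0:ℝ) ≤ σ ^ 2 + s ^ 2)
      have hB : (0:ℝ) ≤ (σ ^ 2 - s ^ 2) * (ε ^ 2 * σ ^ 2 / 2) :=
        mul_nonneg (by nlinarith) (by positivity)
      have key : 0 ≤ (σ ^ 2 - s ^ 2) * (x ^ 2 * (σ ^ 2 + s ^ 2) - ε ^ 2 * σ ^ 2 * s ^ 2) := by
        apply mul_nonneg (by nlinarith)
        nlinarith [hA, hB]
      have e1 : ε ^ 2 / s ^ 2 - x ^ 2 / s ^ 4 = (ε ^ 2 * s ^ 2 - x ^ 2) / s ^ 4 := by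
        field_simp
      have e2 : ε ^ 2 / σ ^ 2 - x ^ 2 / σ ^ 4 = (ε ^ 2 * σ ^ 2 - x ^ 2) / σ ^ 4 := by
        field_simp
      rw [e1, e2, div_le_div_iff₀ (by positivity) (by positivity)]
      linarith [key]
  · intro hy
    unfold gfun at hy
    split_ifs at hy with h1 h2
    · exact ⟨1, ⟨le_refl 1, hσ⟩, by simpa using by nlinarith⟩
    · push_neg at h1
      have hx0 : 0 < x ^ 2 := by nlinarith
      refine ⟨Real.sqrt (2 * x ^ 2) / ε, ⟨?_, ?_⟩, ?_⟩
      · rw [le_div_iff₀ hε, show (1:ℝ) * ε = ε by ring,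
          show ε = Real.sqrt (ε ^ 2) from (Real.sqrt_sq hε.le).symm]
        exact Real.sqrt_le_sqrt (by nlinarith)
      · rw [div_le_iff₀ hε,
          show σ * ε = Real.sqrt ((σ * ε) ^ 2) from (Real.sqrt_sq (by positivity)).symm]
        exact Real.sqrt_le_sqrt (by nlinarith)
      · have hsq : (Real.sqrt (2 * x ^ 2) / ε) ^ 2 = 2 * x ^ 2 / ε ^ 2 := by
          rw [div_pow, Real.sq_sqrt (by positivity)]
        rw [hsq]
        have hxne : x ≠ 0 := by rintro rfl; norm_num at hx0
        have t1 : x ^ 2 / (2 * x ^ 2 / ε ^ 2) = ε ^ 2 / 2 := by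
          field_simp
        have t2 : 2 * x ^ 2 / ε ^ 2 * y ^ 2 ≤ ε ^ 2 / 2 := by
          have he : 4 * x ^ 2 * (ε ^ 4 / (4 * x ^ 2)) = ε ^ 4 := by field_simp
          have hm := mul_le_mul_of_nonneg_left hy (by positivity : (0:ℝ) ≤ 4 * x ^ 2)
          rw [he] at hm
          rw [div_mul_eq_mul_div, div_le_div_iff₀ (by positivity) (by norm_num : (0:ℝ) < 2)]
          nlinarith [hm]
        rw [t1]
        linarith
    · refine ⟨σ, ⟨hσ, le_refl σ⟩, ?_⟩
      have hmul : σ ^ 2 * y ^ 2 ≤ σ ^ 2 * (ε ^ 2 / σ ^ 2 - x ^ 2 / σ ^ 4) :=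
        mul_le_mul_of_nonneg_left hy (by positivity)
      have e : σ ^ 2 * (ε ^ 2 / σ ^ 2 - x ^ 2 / σ ^ 4) = ε ^ 2 - x ^ 2 / σ ^ 2 := by
        field_simp
      rw [e] at hmul
      linarith

lemma gfun_measurable (ε σ : ℝ) : Measurable (gfun ε σ) := by
  unfold gfun
  apply Measurable.ite (measurableSet_le (by fun_prop) measurable_const)
  · fun_prop
  · apply Measurable.ite (measurableSet_le (by fun_prop) measurable_const) <;> fun_prop

lemma gfun_le {ε σ : ℝ} (hε : 0 < ε) (hσ : 1 ≤ σ) (x : ℝ) : gfun ε σ x ≤ ε ^ 2 := by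
  have hσ0 : 0 < σ := lt_of_lt_of_le one_pos hσ
  unfold gfun
  split_ifs with h1 h2
  · nlinarith [sq_nonneg x]
  · have hx0 : 0 < x ^ 2 := by nlinarith
    rw [div_le_iff₀ (by positivity)]; nlinarith
  · have : ε ^ 2 / σ ^ 2 ≤ ε ^ 2 := by
      rw [div_le_iff₀ (by positivity)]
      nlinarith [mul_nonneg (sq_nonneg ε) (by nlinarith : (0:ℝ) ≤ σ ^ 2 - 1)]
    have : 0 ≤ x ^ 2 / σ ^ 4 := by positivity
    linarith

lemma sect_vol (c : ℝ) : volume {y : ℝ | y ^ 2 ≤ c} = ENNReal.ofReal (2 * Real.sqrt c) := by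
  rcases le_or_gt 0 c with hc | hc
  · have : {y : ℝ | y ^ 2 ≤ c} = Set.Icc (-Real.sqrt c) (Real.sqrt c) := by
      ext y
      simp only [Set.mem_setOf_eq, Set.mem_Icc, ← abs_le]
      constructor
      · intro h; exact Real.abs_le_sqrt h
      · intro h
        calc y ^ 2 = |y| ^ 2 := (sq_abs y).symm
          _ ≤ Real.sqrt c ^ 2 := by exact pow_le_pow_left₀ (abs_nonneg y) h 2
          _ = c := Real.sq_sqrt hc
    rw [this, Real.volume_Icc]
    congr 1; ring
  · have h1 : {y : ℝ | y ^ 2 ≤ c} = ∅ := by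
      ext y; simp only [Set.mem_setOf_eq, Set.mem_empty_iff_false, iff_false]
      nlinarith [sq_nonneg y]
    rw [h1, Real.sqrt_eq_zero_of_nonpos hc.le]
    simp


lemma arcsin_sqrt_two_div_two' : Real.arcsin (Real.sqrt 2 / 2) = π / 4 := by
  rw [← Real.sin_pi_div_four, Real.arcsin_sin (by linarith [pi_pos]) (by linarith [pi_pos])]

lemma gfun_even (ε σ x : ℝ) : gfun ε σ (-x) = gfun ε σ x := by
  simp [gfun, neg_sq]

variable {ε σ : ℝ}

lemma integral_piece_mid (hε : 0 < ε) (hσ : 1 ≤ σ) :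
    ∫ x in (-(ε * (Real.sqrt 2 / 2)))..(ε * (Real.sqrt 2 / 2)), 2 * Real.sqrt (gfun ε σ x)
      = π * ε ^ 2 / 2 + ε ^ 2 := by
  have h2 : (Real.sqrt 2) ^ 2 = 2 := Real.sq_sqrt (by norm_num)
  have h2p : (0:ℝ) < Real.sqrt 2 := Real.sqrt_pos.2 (by norm_num)
  have h2le : Real.sqrt 2 ≤ 2 := by nlinarith
  set a := ε * (Real.sqrt 2 / 2) with ha
  have hap : 0 < a := by positivity
  have ha2 : a ^ 2 = ε ^ 2 / 2 := by rw [ha, mul_pow, div_pow, h2]; ring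
  have heq : Set.EqOn (fun x => 2 * Real.sqrt (gfun ε σ x))
      (fun x => 2 * Real.sqrt (ε ^ 2 - x ^ 2)) (Set.uIcc (-a) a) := by
    intro x hx
    rw [Set.uIcc_of_le (by linarith)] at hx
    have hx2 : x ^ 2 ≤ ε ^ 2 / 2 := by rw [← ha2]; exact sq_le_sq' hx.1 hx.2
    simp only [gfun, if_pos hx2]
  rw [intervalIntegral.integral_congr heq, intervalIntegral.integral_const_mul,
    integral_sqrt_sub_sq hε (by nlinarith) (by linarith) (by nlinarith)]
  have hsv : Real.sqrt (ε ^ 2 - a ^ 2) = a := by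
    rw [show ε ^ 2 - a ^ 2 = a ^ 2 by rw [ha2]; ring, Real.sqrt_sq hap.le]
  have hda : a / ε = Real.sqrt 2 / 2 := by rw [ha, mul_div_cancel_left₀ _ hε.ne']
  unfold Hfun
  rw [hsv, hda, show (-a) / ε = -(Real.sqrt 2 / 2) by rw [← hda]; ring,
    Real.arcsin_neg, arcsin_sqrt_two_div_two',
    show ε ^ 2 - (-a) ^ 2 = ε ^ 2 - a ^ 2 by ring, hsv]
  linear_combination 2 * ha2

lemma integral_piece_log (hε : 0 < ε) (hσ : 1 ≤ σ) :
    ∫ x in (ε * (Real.sqrt 2 / 2))..(σ * ε * (Real.sqrt 2 / 2)), 2 * Real.sqrt (gfun ε σ x)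
      = ε ^ 2 * Real.log σ := by
  have h2 : (Real.sqrt 2) ^ 2 = 2 := Real.sq_sqrt (by norm_num)
  have h2p : (0:ℝ) < Real.sqrt 2 := Real.sqrt_pos.2 (by norm_num)
  have hσ0 : 0 < σ := lt_of_lt_of_le one_pos hσ
  set a := ε * (Real.sqrt 2 / 2) with ha
  set b := σ * ε * (Real.sqrt 2 / 2) with hb
  have hap : 0 < a := by positivity
  have hab : a ≤ b := by rw [ha, hb]; nlinarith [h2p, hε, hσ]
  have ha2 : a ^ 2 = ε ^ 2 / 2 := by rw [ha, mul_pow, div_pow, h2]; ring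
  have hb2 : b ^ 2 = σ ^ 2 * ε ^ 2 / 2 := by rw [hb, mul_pow, div_pow, h2]; ring_nf
  have heq : Set.EqOn (fun x => 2 * Real.sqrt (gfun ε σ x))
      (fun x => ε ^ 2 * (1 / x)) (Set.uIcc a b) := by
    intro x hx
    rw [Set.uIcc_of_le hab] at hx
    have hxp : 0 < x := lt_of_lt_of_le hap hx.1
    have hxa : ε ^ 2 / 2 ≤ x ^ 2 := by rw [← ha2]; nlinarith [hx.1]
    have hxb : x ^ 2 ≤ σ ^ 2 * ε ^ 2 / 2 := by rw [← hb2]; nlinarith [hx.2]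
    simp only [gfun]
    split_ifs with h1
    · -- x² = ε²/2
      have hxe : x ^ 2 = ε ^ 2 / 2 := le_antisymm h1 hxa
      have : ε ^ 2 - x ^ 2 = x ^ 2 := by rw [hxe]; ring
      rw [this, Real.sqrt_sq hxp.le, mul_one_div, eq_div_iff hxp.ne']
      nlinarith [hxe]
    · have : ε ^ 4 / (4 * x ^ 2) = (ε ^ 2 / (2 * x)) ^ 2 := by field_simp; ring
      rw [this, Real.sqrt_sq (by positivity), mul_one_div]
      field_simp
      try ring
  rw [intervalIntegral.integral_congr heq, intervalIntegral.integral_const_mul,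
    integral_one_div (by
      intro h
      rw [Set.uIcc_of_le hab] at h
      exact absurd h.1 (by simp; positivity))]
  have hba : b = σ * a := by rw [ha, hb]; ring
  rw [hba, mul_div_assoc, div_self hap.ne', mul_one]

lemma integral_piece_right (hε : 0 < ε) (hσ : 1 ≤ σ) :
    ∫ x in (σ * ε * (Real.sqrt 2 / 2))..(σ * ε), 2 * Real.sqrt (gfun ε σ x)
      = π * ε ^ 2 / 4 - ε ^ 2 / 2 := by
  have h2 : (Real.sqrt 2) ^ 2 = 2 := Real.sq_sqrt (by norm_num)
  have h2p : (0:ℝ) < Real.sqrt 2 := Real.sqrt_pos.2 (by norm_num)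
  have h2le : Real.sqrt 2 ≤ 2 := by nlinarith
  have hσ0 : 0 < σ := lt_of_lt_of_le one_pos hσ
  set r := σ * ε with hr
  have hrp : 0 < r := by positivity
  set b := r * (Real.sqrt 2 / 2) with hb
  have hbp : 0 < b := by positivity
  have hbr : b ≤ r := by rw [hb]; nlinarith
  have hb2 : b ^ 2 = σ ^ 2 * ε ^ 2 / 2 := by rw [hb, hr, mul_pow, div_pow, h2]; ring_nf
  have hr2 : r ^ 2 = σ ^ 2 * ε ^ 2 := by rw [hr]; ring
  have heq : Set.EqOn (fun x => 2 * Real.sqrt (gfun ε σ x))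
      (fun x => (2 / σ ^ 2) * Real.sqrt (r ^ 2 - x ^ 2)) (Set.uIcc b r) := by
    intro x hx
    rw [Set.uIcc_of_le hbr] at hx
    have hxp : 0 < x := lt_of_lt_of_le hbp hx.1
    have hxb : σ ^ 2 * ε ^ 2 / 2 ≤ x ^ 2 := by rw [← hb2]; nlinarith [hx.1]
    have hxr : x ^ 2 ≤ σ ^ 2 * ε ^ 2 := by rw [← hr2]; nlinarith [hx.2]
    simp only [gfun]
    split_ifs with h1 h2'
    · -- forces σ = 1 and x² = ε²/2
      have hσ1 : σ ^ 2 = 1 := le_antisymm (by nlinarith [mul_pos hε hε]) (by nlinarith)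
      rw [hr2, hσ1]
      norm_num
    · have hxe : x ^ 2 = σ ^ 2 * ε ^ 2 / 2 := le_antisymm h2' hxb
      have e1 : ε ^ 4 / (4 * x ^ 2) = (ε ^ 2 / (2 * x)) ^ 2 := by field_simp; ring
      have e2 : r ^ 2 - x ^ 2 = x ^ 2 := by rw [hr2, hxe]; ring
      rw [e1, Real.sqrt_sq (by positivity), e2, Real.sqrt_sq hxp.le]
      field_simp
      nlinarith [hxe]
      
    · have e : ε ^ 2 / σ ^ 2 - x ^ 2 / σ ^ 4 = (r ^ 2 - x ^ 2) / (σ ^ 2) ^ 2 := by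
        rw [hr2]; field_simp
      rw [e, Real.sqrt_div (by nlinarith), Real.sqrt_sq (by positivity)]
      field_simp
  rw [intervalIntegral.integral_congr heq, intervalIntegral.integral_const_mul,
    integral_sqrt_sub_sq hrp (by linarith) hbr (le_refl r)]
  unfold Hfun
  have hdb : b / r = Real.sqrt 2 / 2 := by rw [hb, mul_div_cancel_left₀ _ hrp.ne']
  have hsv : Real.sqrt (r ^ 2 - b ^ 2) = b := by
    rw [show r ^ 2 - b ^ 2 = b ^ 2 by rw [hb2, hr2]; ring, Real.sqrt_sq hbp.le]
  rw [hdb, arcsin_sqrt_two_div_two', hsv, div_self hrp.ne', Real.arcsin_one,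
    show r ^ 2 - r ^ 2 = 0 by ring, Real.sqrt_zero]
  rw [mul_zero, add_zero, show b * b = r ^ 2 / 2 by linear_combination hb2 - hr2 / 2, hr2]
  field_simp
  ring

/-- Proposition 2: the area of the union of the ellipses
`E(s) = {(x,y) : x²/s² + s²y² ≤ ε²}` over `s ∈ [1, σ]` equals `(π + 2 log σ)·ε²`. -/
theorem area_union_ellipses (ε σ : ℝ) (hε : 0 < ε) (hσ : 1 ≤ σ) :
    volume (⋃ s ∈ Set.Icc (1 : ℝ) σ,
        {p : ℝ × ℝ | p.1 ^ 2 / s ^ 2 + s ^ 2 * p.2 ^ 2 ≤ ε ^ 2}) =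
      ENNReal.ofReal ((π + 2 * Real.log σ) * ε ^ 2) := by
  have hσ0 : 0 < σ := lt_of_lt_of_le one_pos hσ
  have h2 : (Real.sqrt 2) ^ 2 = 2 := Real.sq_sqrt (by norm_num)
  have h2p : (0:ℝ) < Real.sqrt 2 := Real.sqrt_pos.2 (by norm_num)
  have h2le : Real.sqrt 2 ≤ 2 := by nlinarith
  have hU : (⋃ s ∈ Set.Icc (1 : ℝ) σ,
      {p : ℝ × ℝ | p.1 ^ 2 / s ^ 2 + s ^ 2 * p.2 ^ 2 ≤ ε ^ 2})
      = {p : ℝ × ℝ | p.2 ^ 2 ≤ gfun ε σ p.1} := by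
    ext p
    simp only [Set.mem_iUnion, Set.mem_setOf_eq, exists_prop]
    exact gfun_key hε hσ p.1 p.2
  rw [hU]
  have hgm := gfun_measurable ε σ
  have hmeas : MeasurableSet {p : ℝ × ℝ | p.2 ^ 2 ≤ gfun ε σ p.1} :=
    measurableSet_le (by fun_prop) (hgm.comp measurable_fst)
  rw [Measure.volume_eq_prod, Measure.prod_apply hmeas]
  have hsect : ∀ x : ℝ, volume (Prod.mk x ⁻¹' {p : ℝ × ℝ | p.2 ^ 2 ≤ gfun ε σ p.1})
      = ENNReal.ofReal (2 * Real.sqrt (gfun ε σ x)) := by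
    intro x
    have : Prod.mk x ⁻¹' {p : ℝ × ℝ | p.2 ^ 2 ≤ gfun ε σ p.1} = {y : ℝ | y ^ 2 ≤ gfun ε σ x} := rfl
    rw [this, sect_vol]
  simp_rw [hsect]
  -- the integrand
  set f : ℝ → ℝ := fun x => 2 * Real.sqrt (gfun ε σ x) with hf
  have hfm : Measurable f := (Real.continuous_sqrt.measurable.comp hgm).const_mul 2
  have hfnn : ∀ x, 0 ≤ f x := fun x => by rw [hf]; positivity
  -- support
  have hzero : ∀ x ∉ Set.Ioc (-(σ * ε)) (σ * ε), f x = 0 := by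
    intro x hx
    have hx2 : σ ^ 2 * ε ^ 2 ≤ x ^ 2 := by
      simp only [Set.mem_Ioc, not_and_or, not_lt, not_le] at hx
      rcases hx with h | h
      · nlinarith [sq_nonneg (x + σ * ε), mul_pos hσ0 hε]
      · nlinarith [sq_nonneg (x - σ * ε), mul_pos hσ0 hε]
    have hg : gfun ε σ x ≤ 0 := by
      unfold gfun
      have hε2 : (0:ℝ) < ε ^ 2 := by positivity
      have hσε : ε ^ 2 ≤ σ ^ 2 * ε ^ 2 := by nlinarith [mul_nonneg (by nlinarith : (0:ℝ) ≤ σ ^ 2 - 1) hε2.le]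
      split_ifs with hh1 hh2
      · nlinarith
      · nlinarith [mul_pos (mul_pos hσ0 hσ0) hε2]
      · have : ε ^ 2 / σ ^ 2 ≤ x ^ 2 / σ ^ 4 := by
          rw [div_le_div_iff₀ (by positivity) (by positivity)]
          nlinarith [mul_le_mul_of_nonneg_right hx2 (sq_nonneg σ)]
        linarith
    show 2 * Real.sqrt (gfun ε σ x) = 0
    rw [Real.sqrt_eq_zero_of_nonpos hg, mul_zero]
  have hsupp : Function.support f ⊆ Set.Ioc (-(σ * ε)) (σ * ε) := by
    intro x hx
    by_contra hc
    exact hx (hzero x hc)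
  -- integrability
  have hint : Integrable f := by
    rw [← integrableOn_iff_integrable_of_support_subset hsupp]
    apply Measure.integrableOn_of_bounded (M := 2 * ε) (by simp [Real.volume_Ioc])
      hfm.aestronglyMeasurable
    filter_upwards with x
    rw [Real.norm_eq_abs, abs_of_nonneg (hfnn x)]
    show 2 * Real.sqrt (gfun ε σ x) ≤ 2 * ε
    have := Real.sqrt_le_sqrt (gfun_le hε hσ x)
    rw [Real.sqrt_sq hε.le] at this
    linarith
  rw [← ofReal_integral_eq_lintegral_ofReal hint
    (Filter.Eventually.of_forall fun x => hfnn x)]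
  congr 1
  -- reduce to an interval integral
  have horder1 : 0 < ε * (Real.sqrt 2 / 2) := by positivity
  have horder2 : ε * (Real.sqrt 2 / 2) ≤ σ * ε * (Real.sqrt 2 / 2) := by nlinarith
  have horder3 : σ * ε * (Real.sqrt 2 / 2) ≤ σ * ε := by nlinarith
  have hIoc : ∫ x, f x = ∫ x in (-(σ * ε))..(σ * ε), f x := by
    rw [intervalIntegral.integral_of_le (by nlinarith),
      setIntegral_eq_integral_of_forall_compl_eq_zero hzero]
  have hii : ∀ u v : ℝ, IntervalIntegrable f volume u v := fun u v => hint.intervalIntegrable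
  have feven : ∀ x, f (-x) = f x := fun x => by
    show 2 * Real.sqrt (gfun ε σ (-x)) = 2 * Real.sqrt (gfun ε σ x)
    rw [gfun_even]
  have hreflect : ∀ u v : ℝ, (∫ x in (-v)..(-u), f x) = ∫ x in u..v, f x := by
    intro u v
    rw [← intervalIntegral.integral_comp_neg f]
    simp only [feven]
  have hsplit : ∫ x in (-(σ * ε))..(σ * ε), f x =
      (∫ x in (-(σ * ε))..(-(σ * ε * (Real.sqrt 2 / 2))), f x)
      + (∫ x in (-(σ * ε * (Real.sqrt 2 / 2)))..(-(ε * (Real.sqrt 2 / 2))), f x)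
      + (∫ x in (-(ε * (Real.sqrt 2 / 2)))..(ε * (Real.sqrt 2 / 2)), f x)
      + (∫ x in (ε * (Real.sqrt 2 / 2))..(σ * ε * (Real.sqrt 2 / 2)), f x)
      + (∫ x in (σ * ε * (Real.sqrt 2 / 2))..(σ * ε), f x) := by
    rw [intervalIntegral.integral_add_adjacent_intervals (hii _ _) (hii _ _),
      intervalIntegral.integral_add_adjacent_intervals (hii _ _) (hii _ _),
      intervalIntegral.integral_add_adjacent_intervals (hii _ _) (hii _ _),
      intervalIntegral.integral_add_adjacent_intervals (hii _ _) (hii _ _)]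
  have hv1 : (∫ x in (-(σ * ε))..(-(σ * ε * (Real.sqrt 2 / 2))), f x)
      = π * ε ^ 2 / 4 - ε ^ 2 / 2 := by
    rw [hreflect]; exact integral_piece_right hε hσ
  have hv2 : (∫ x in (-(σ * ε * (Real.sqrt 2 / 2)))..(-(ε * (Real.sqrt 2 / 2))), f x)
      = ε ^ 2 * Real.log σ := by
    rw [hreflect]; exact integral_piece_log hε hσ
  have hv3 : (∫ x in (-(ε * (Real.sqrt 2 / 2)))..(ε * (Real.sqrt 2 / 2)), f x)
      = π * ε ^ 2 / 2 + ε ^ 2 := integral_piece_mid hε hσ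
  have hv4 : (∫ x in (ε * (Real.sqrt 2 / 2))..(σ * ε * (Real.sqrt 2 / 2)), f x)
      = ε ^ 2 * Real.log σ := integral_piece_log hε hσ
  have hv5 : (∫ x in (σ * ε * (Real.sqrt 2 / 2))..(σ * ε), f x)
      = π * ε ^ 2 / 4 - ε ^ 2 / 2 := integral_piece_right hε hσ
  rw [hIoc, hsplit, hv1, hv2, hv3, hv4, hv5]
  ring
end

section
/- Suppose W(t) = Σ(t)·V(t)ᵀ where Σ(t) = diag(σ₁(t), σ₂(t)) with σ₁, σ₂ differentiable and positive, and V(t) is a rotation satisfying V'(t) = ω(t)·J·V(t) with J = [[0,−1],[1,0]]. Then W'(t) = M(t)·W(t) where M(t) = [[σ₁'/σ₁, ω·σ₁/σ₂],[−ω·σ₂/σ₁, σ₂'/σ₂]]. -/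
open Matrix

/-- If `W(t) = Σ(t) V(t)ᵀ` with `Σ(t) = diag(σ₁(t), σ₂(t))` (`σᵢ` differentiable and
positive) and `V(t)` a rotation satisfying `V' = ω J V`, `J = [[0,-1],[1,0]]`, then
`W' = M W` with `M = [[σ₁'/σ₁, ω σ₁/σ₂], [−ω σ₂/σ₁, σ₂'/σ₂]]`. -/
theorem singular_rotation_ode (σ₁ σ₂ σ₁' σ₂' ω : ℝ → ℝ)
    (V : ℝ → Matrix (Fin 2) (Fin 2) ℝ)
    (hσ₁ : ∀ t, HasDerivAt σ₁ (σ₁' t) t) (hσ₂ : ∀ t, HasDerivAt σ₂ (σ₂' t) t)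
    (hσ₁pos : ∀ t, 0 < σ₁ t) (hσ₂pos : ∀ t, 0 < σ₂ t)
    (hrot : ∀ t, V t * (V t)ᵀ = 1 ∧ (V t).det = 1)
    (hV : ∀ t i j, HasDerivAt (fun u => V u i j)
      ((ω t • ((!![0, -1; 1, 0] : Matrix (Fin 2) (Fin 2) ℝ) * V t)) i j) t) :
    ∀ t i j, HasDerivAt (fun u => (Matrix.diagonal ![σ₁ u, σ₂ u] * (V u)ᵀ) i j)
      ((!![σ₁' t / σ₁ t, ω t * σ₁ t / σ₂ t; -(ω t * σ₂ t / σ₁ t), σ₂' t / σ₂ t] *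
        (Matrix.diagonal ![σ₁ t, σ₂ t] * (V t)ᵀ)) i j) t := by
  intro t i j
  obtain ⟨horth, hdet⟩ := hrot t
  have e1 : V t 0 0 * V t 0 0 + V t 0 1 * V t 0 1 = 1 := by
    have := congrFun (congrFun horth 0) 0
    simpa [Matrix.mul_apply, Fin.sum_univ_two, Matrix.one_apply] using this
  have e2 : V t 0 0 * V t 1 0 + V t 0 1 * V t 1 1 = 0 := by
    have := congrFun (congrFun horth 0) 1
    simpa [Matrix.mul_apply, Fin.sum_univ_two, Matrix.one_apply] using this
  have e3 : V t 0 0 * V t 1 1 - V t 0 1 * V t 1 0 = 1 := by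
    have := hdet
    rw [Matrix.det_fin_two] at this
    linarith
  have h11 : V t 1 1 = V t 0 0 := by
    linear_combination (-(V t 1 1)) * e1 + (V t 0 0) * e3 + (V t 0 1) * e2
  have h10 : V t 1 0 = - V t 0 1 := by
    linear_combination (-(V t 1 0)) * e1 - (V t 0 1) * e3 + (V t 0 0) * e2
  have hσ₁0 : σ₁ t ≠ 0 := (hσ₁pos t).ne'
  have hσ₂0 : σ₂ t ≠ 0 := (hσ₂pos t).ne'
  have hV00 := hV t 0 0
  have hV01 := hV t 0 1
  have hV10 := hV t 1 0
  have hV11 := hV t 1 1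
  simp only [Matrix.smul_apply, Matrix.mul_apply, Fin.sum_univ_two, Matrix.cons_val',
    Matrix.cons_val_zero, Matrix.cons_val_one, Matrix.head_cons, Matrix.empty_val',
    Matrix.cons_val_fin_one, Matrix.head_fin_const, smul_eq_mul] at hV00 hV01 hV10 hV11
  have key : ∀ (a : ℝ → ℝ) (a' : ℝ) (p q : Fin 2), HasDerivAt a a' t →
      HasDerivAt (fun u => a u * V u p q) (a' * V t p q + a t * ((ω t • ((!![0, -1; 1, 0] : Matrix (Fin 2) (Fin 2) ℝ) * V t)) p q)) t :=
    fun a a' p q ha => ha.mul (hV t p q)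
  fin_cases i <;> fin_cases j <;>
    simp only [Matrix.mul_apply, Fin.sum_univ_two, Matrix.diagonal_apply, Matrix.transpose_apply,
      Matrix.smul_apply, Fin.isValue, Matrix.cons_val', Matrix.cons_val_zero, Matrix.cons_val_one,
      Matrix.head_cons, Matrix.empty_val', Matrix.cons_val_fin_one, Matrix.head_fin_const,
      Fin.zero_eta, Fin.mk_one, smul_eq_mul] <;>
    norm_num [Matrix.diagonal_apply]
  · convert key σ₁ (σ₁' t) 0 0 (hσ₁ t) using 1
    simp only [Matrix.smul_apply, Matrix.mul_apply, Fin.sum_univ_two, smul_eq_mul]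
    norm_num [h10]
    field_simp
  · convert key σ₁ (σ₁' t) 1 0 (hσ₁ t) using 1
    simp only [Matrix.smul_apply, Matrix.mul_apply, Fin.sum_univ_two, smul_eq_mul]
    norm_num [h11]
    field_simp
  · convert key σ₂ (σ₂' t) 0 1 (hσ₂ t) using 1
    simp only [Matrix.smul_apply, Matrix.mul_apply, Fin.sum_univ_two, smul_eq_mul]
    norm_num [h11]
    field_simp
    ring
  · convert key σ₂ (σ₂' t) 1 1 (hσ₂ t) using 1
    simp only [Matrix.smul_apply, Matrix.mul_apply, Fin.sum_univ_two, smul_eq_mul]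
    norm_num [h10]
    field_simp
    ring
end
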